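/- Let T ∈ (0, ∞]. Suppose u : ℝ³ × [0, T) → ℝ³ is jointly C² and satisfies the pressureless transport equation ∂ₜu + (u·∇)u = 0 at every point of ℝ³ × [0, T). If there exist a point ξ₀ ∈ ℝ³, a nonzero vector w ∈ ℝ³ and a real number ℓ < 0 such that the spatial Jacobian matrix ∇u(ξ₀, 0) satisfies ∇u(ξ₀, 0) w = ℓ w, then T ≤ −1/ℓ; in particular T < +∞. -/

import Mathlib

/-- The spatial Jacobian matrix `(∂ⱼuᵢ(x,t))ᵢⱼ` of a time-dependent vector field
`u : ℝ³ × ℝ → ℝ³`. -/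
noncomputable def spatialJacobian (u : (Fin 3 → ℝ) × ℝ → Fin 3 → ℝ)
    (x : Fin 3 → ℝ) (t : ℝ) : Matrix (Fin 3) (Fin 3) ℝ :=
  Matrix.of fun i j => fderiv ℝ (fun y => u (y, t) i) x (Pi.single j 1)

open Set Filter Real ContinuousLinearMap

/-- Decomposition `(c, 0) = ∑ⱼ cⱼ • (eⱼ, 0)` used to identify directional derivatives. -/
lemma sum_single_decomp (c : Fin 3 → ℝ) :
    ((c, (0:ℝ)) : (Fin 3 → ℝ) × ℝ) =
      ∑ j, c j • ((Pi.single j 1, 0) : (Fin 3 → ℝ) × ℝ) := by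
  have h1 : (∑ j, c j • ((Pi.single j 1, 0) : (Fin 3 → ℝ) × ℝ)).1
      = ∑ j, c j • (Pi.single j 1 : Fin 3 → ℝ) := by
    simp [Prod.fst_sum]
  have h2 : ∑ j, c j • (Pi.single j 1 : Fin 3 → ℝ) = c := by
    have : ∀ j, c j • (Pi.single j 1 : Fin 3 → ℝ) = Pi.single j (c j) := by
      intro j
      ext k
      by_cases h : k = j
      · subst h; simp
      · simp [Pi.single_eq_of_ne h]
    simp_rw [this]
    exact Finset.univ_sum_single c
  ext
  · rw [h1, h2]
  · simp [Prod.snd_sum]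

/-- If `u` is jointly `C²` on `ℝ³ × [0,T)` and solves `∂ₜu + (u·∇)u = 0` there, and the
spatial Jacobian `∇u(ξ₀,0)` has an eigenvector `w ≠ 0` with a negative eigenvalue `ℓ`,
then `T ≤ -1/ℓ`; in particular `T < +∞`. -/
theorem stmt0 (T : EReal) (hT : 0 < T)
    (u : (Fin 3 → ℝ) × ℝ → Fin 3 → ℝ)
    (hu : ContDiffOn ℝ 2 u {p : (Fin 3 → ℝ) × ℝ | 0 ≤ p.2 ∧ (p.2 : EReal) < T})
    (heq : ∀ (x : Fin 3 → ℝ) (t : ℝ), 0 ≤ t → (t : EReal) < T → ∀ i : Fin 3,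
      deriv (fun s => u (x, s) i) t
        + ∑ j, u (x, t) j * fderiv ℝ (fun y => u (y, t) i) x (Pi.single j 1) = 0)
    (ξ₀ : Fin 3 → ℝ) (w : Fin 3 → ℝ) (hw : w ≠ 0) (ℓ : ℝ) (hℓ : ℓ < 0)
    (heig : (spatialJacobian u ξ₀ 0).mulVec w = ℓ • w) :
    T ≤ ((-1 / ℓ : ℝ) : EReal) ∧ T < ⊤ := by
  classical
  have hℓ0 : ℓ ≠ 0 := ne_of_lt hℓ
  set t₁ : ℝ := -1 / ℓ with ht₁def
  have ht₁pos : 0 < t₁ := by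
    rw [ht₁def, neg_div]
    exact neg_pos.mpr (div_neg_of_pos_of_neg one_pos hℓ)
  set S : Set ((Fin 3 → ℝ) × ℝ) := {p : (Fin 3 → ℝ) × ℝ | 0 ≤ p.2 ∧ (p.2 : EReal) < T}
    with hSdef
  set U : Set ((Fin 3 → ℝ) × ℝ) := {p : (Fin 3 → ℝ) × ℝ | 0 < p.2 ∧ (p.2 : EReal) < T}
    with hUdef
  have hUS : U ⊆ S := fun p hp => ⟨le_of_lt hp.1, hp.2⟩
  have hUopen : IsOpen U := by
    have h1 : IsOpen {p : (Fin 3 → ℝ) × ℝ | 0 < p.2} :=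
      isOpen_lt continuous_const continuous_snd
    have h2 : IsOpen {p : (Fin 3 → ℝ) × ℝ | (p.2 : EReal) < T} :=
      isOpen_lt (continuous_coe_real_ereal.comp continuous_snd) continuous_const
    have : U = {p : (Fin 3 → ℝ) × ℝ | 0 < p.2} ∩ {p : (Fin 3 → ℝ) × ℝ | (p.2 : EReal) < T} := by
      ext p; simp [hUdef, Set.mem_setOf_eq, Set.mem_inter_iff]
    rw [this]
    exact h1.inter h2
  have hSnhds : ∀ p ∈ U, S ∈ nhds p := fun p hp =>
    mem_nhds_iff.mpr ⟨U, hUS, hUopen, hp⟩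
  -- the key contradiction argument
  have key : ¬ ((t₁ : EReal) < T) := by
    intro ht₁T
    -- convexity and unique differentiability of S
    have hSconv : Convex ℝ S := by
      intro p hp q hq a b ha hb hab
      refine ⟨?_, ?_⟩
      · have : (a • p + b • q).2 = a * p.2 + b * q.2 := rfl
        rw [this]
        have := hp.1; have := hq.1
        positivity
      · have h2 : (a • p + b • q).2 = a * p.2 + b * q.2 := rfl
        have hle : a * p.2 + b * q.2 ≤ max p.2 q.2 := by
          calc a * p.2 + b * q.2 ≤ a * max p.2 q.2 + b * max p.2 q.2 := by
                gcongr
                · exact le_max_left _ _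
                · exact le_max_right _ _
            _ = max p.2 q.2 := by rw [← add_mul, hab, one_mul]
        rw [h2]
        have hmax : ((max p.2 q.2 : ℝ) : EReal) < T := by
          rcases max_cases p.2 q.2 with ⟨h, _⟩ | ⟨h, _⟩
          · rw [h]; exact hp.2
          · rw [h]; exact hq.2
        exact lt_of_le_of_lt (EReal.coe_le_coe_iff.mpr hle) hmax
    have hSuniq : UniqueDiffOn ℝ S := by
      apply uniqueDiffOn_convex hSconv
      refine ⟨(ξ₀, t₁ / 2), ?_⟩
      have hmem : (ξ₀, t₁ / 2) ∈ U := by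
        constructor
        · exact half_pos ht₁pos
        · exact lt_trans (EReal.coe_lt_coe_iff.mpr (half_lt_self ht₁pos)) ht₁T
      exact interior_maximal hUS hUopen hmem
    have hcontD : ContinuousOn (fun p => fderivWithin ℝ u S p) S :=
      hu.continuousOn_fderivWithin hSuniq one_le_two
    -- the PDE in terms of the full derivative, at interior points
    have hpde : ∀ p ∈ U, fderiv ℝ u p (u p, 1) = 0 := by
      rintro ⟨x, t⟩ hp
      have hd : DifferentiableAt ℝ u (x, t) :=
        (hu.contDiffAt (hSnhds _ hp)).differentiableAt two_ne_zero
      set f' := fderiv ℝ u (x, t) with hf'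
      have hderiv_t : ∀ i, deriv (fun s => u (x, s) i) t = f' (0, 1) i := by
        intro i
        have hι : HasDerivAt (fun s : ℝ => ((x : Fin 3 → ℝ), s)) ((0 : Fin 3 → ℝ), (1 : ℝ)) t :=
          (hasDerivAt_const t x).prodMk (hasDerivAt_id t)
        have h1 : HasDerivAt (fun s => u (x, s)) (f' (0, 1)) t :=
          hd.hasFDerivAt.comp_hasDerivAt t hι
        have h2 : HasDerivAt (fun s => u (x, s) i) (f' (0, 1) i) t :=
          (ContinuousLinearMap.proj (R := ℝ) (φ := fun _ : Fin 3 => ℝ)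
            i).hasFDerivAt.comp_hasDerivAt t h1
        exact h2.deriv
      have hspat : ∀ i j, fderiv ℝ (fun y => u (y, t) i) x (Pi.single j 1)
          = f' (Pi.single j 1, 0) i := by
        intro i j
        have hι : HasFDerivAt (fun y : Fin 3 → ℝ => (y, t))
            (ContinuousLinearMap.inl ℝ (Fin 3 → ℝ) ℝ) x := hasFDerivAt_prodMk_left x t
        have h1 : HasFDerivAt (fun y : Fin 3 → ℝ => u (y, t))
            (f'.comp (ContinuousLinearMap.inl ℝ (Fin 3 → ℝ) ℝ)) x :=
          hd.hasFDerivAt.comp x hι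
        have h2 : HasFDerivAt (fun y : Fin 3 → ℝ => u (y, t) i)
            ((ContinuousLinearMap.proj (R := ℝ) (φ := fun _ : Fin 3 => ℝ) i).comp
              (f'.comp (ContinuousLinearMap.inl ℝ (Fin 3 → ℝ) ℝ))) x :=
          (ContinuousLinearMap.proj (R := ℝ) (φ := fun _ : Fin 3 => ℝ) i).hasFDerivAt.comp x h1
        rw [h2.fderiv]
        simp [ContinuousLinearMap.inl]
      have hsum : ∀ i, ∑ j, u (x, t) j * f' (Pi.single j 1, 0) i = f' (u (x, t), 0) i := by
        intro i
        have : f' (u (x, t), 0) = ∑ j, u (x, t) j • f' (Pi.single j 1, 0) := by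
          rw [sum_single_decomp (u (x, t))]
          rw [map_sum]
          simp_rw [map_smul]
        rw [this]
        rw [Finset.sum_apply]
        simp [Pi.smul_apply, smul_eq_mul]
      have heqp := heq x t (le_of_lt hp.1) hp.2
      have hcomp : ∀ i, f' (u (x, t), 1) i = 0 := by
        intro i
        have h := heqp i
        rw [hderiv_t i] at h
        simp_rw [hspat] at h
        rw [hsum i] at h
        have hsplit : ((u (x, t), (1:ℝ)) : (Fin 3 → ℝ) × ℝ) = (0, 1) + (u (x, t), 0) := by
          ext <;> simp
        rw [hsplit, map_add]
        simpa using h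
      funext i
      exact hcomp i
    -- the flow identity: u (x + t₁ • u (x,0), t₁) = u (x,0) for every x
    have flow : ∀ x : Fin 3 → ℝ, u (x + t₁ • u (x, 0), t₁) = u (x, 0) := by
      intro x
      set v : Fin 3 → ℝ := u (x, 0) with hv
      set γ : ℝ → (Fin 3 → ℝ) := fun t => x + t • v with hγ
      set φ : ℝ → (Fin 3 → ℝ) × ℝ := fun t => (γ t, t) with hφ
      set g : ℝ → (Fin 3 → ℝ) := fun t => u (φ t) - v with hg
      have hφcont : Continuous φ := by
        apply Continuous.prodMk
        · exact continuous_const.add (continuous_id.smul continuous_const)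
        · exact continuous_id
      have hmemS : ∀ t ∈ Icc (0:ℝ) t₁, φ t ∈ S := by
        intro t ht
        refine ⟨ht.1, ?_⟩
        exact lt_of_le_of_lt (EReal.coe_le_coe_iff.mpr ht.2) ht₁T
      have hmemU : ∀ t ∈ Ioc (0:ℝ) t₁, φ t ∈ U := by
        intro t ht
        refine ⟨ht.1, ?_⟩
        exact lt_of_le_of_lt (EReal.coe_le_coe_iff.mpr ht.2) ht₁T
      -- uniform bound on the derivative along the compact curve
      have hCcomp : IsCompact (φ '' Icc 0 t₁) := (isCompact_Icc).image hφcont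
      have hCS : φ '' Icc 0 t₁ ⊆ S := by
        rintro _ ⟨t, ht, rfl⟩; exact hmemS t ht
      obtain ⟨K, hK⟩ := hCcomp.exists_bound_of_continuousOn (hcontD.mono hCS)
      -- derivative of g at interior times
      have hgderiv : ∀ t ∈ Ioo (0:ℝ) t₁,
          HasDerivAt g (fderiv ℝ u (φ t) (-(g t), 0)) t := by
        intro t ht
        have hpU : φ t ∈ U := hmemU t ⟨ht.1, le_of_lt ht.2⟩
        have hd : DifferentiableAt ℝ u (φ t) :=
          (hu.contDiffAt (hSnhds _ hpU)).differentiableAt two_ne_zero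
        have hφd : HasDerivAt φ (v, 1) t := by
          have h1 : HasDerivAt γ v t := by
            have : HasDerivAt (fun s : ℝ => s • v) ((1:ℝ) • v) t :=
              (hasDerivAt_id t).smul_const v
            simpa only [one_smul] using this.const_add x
          exact h1.prodMk (hasDerivAt_id t)
        have h2 : HasDerivAt (fun t => u (φ t)) (fderiv ℝ u (φ t) (v, 1)) t :=
          hd.hasFDerivAt.comp_hasDerivAt t hφd
        have h3 : HasDerivAt g (fderiv ℝ u (φ t) (v, 1)) t := h2.sub_const v
        have h4 : fderiv ℝ u (φ t) (v, 1) = fderiv ℝ u (φ t) (-(g t), 0) := by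
          have hsplit : ((v, (1:ℝ)) : (Fin 3 → ℝ) × ℝ) = (-(g t), 0) + (u (φ t), 1) := by
            ext
            · simp [hg, neg_sub]
            · simp
          rw [hsplit, map_add, hpde (φ t) hpU, add_zero]
        rw [h4] at h3
        exact h3
      -- bound on the derivative
      have hbound : ∀ t ∈ Ioo (0:ℝ) t₁,
          ‖fderiv ℝ u (φ t) (-(g t), 0)‖ ≤ K * ‖g t‖ := by
        intro t ht
        have hpU : φ t ∈ U := hmemU t ⟨ht.1, le_of_lt ht.2⟩
        have heqD : fderiv ℝ u (φ t) = fderivWithin ℝ u S (φ t) :=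
          (fderivWithin_of_mem_nhds (hSnhds _ hpU)).symm
        have hKb : ‖fderivWithin ℝ u S (φ t)‖ ≤ K :=
          hK _ ⟨t, ⟨le_of_lt ht.1, le_of_lt ht.2⟩, rfl⟩
        have hnorm : ‖((-(g t), (0:ℝ)) : (Fin 3 → ℝ) × ℝ)‖ = ‖g t‖ := by
          rw [Prod.norm_def]
          simp [norm_neg, norm_nonneg]
        calc ‖fderiv ℝ u (φ t) (-(g t), 0)‖
            ≤ ‖fderiv ℝ u (φ t)‖ * ‖((-(g t), (0:ℝ)) : (Fin 3 → ℝ) × ℝ)‖ :=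
              (fderiv ℝ u (φ t)).le_opNorm _
          _ ≤ K * ‖g t‖ := by
              rw [hnorm, heqD]
              exact mul_le_mul_of_nonneg_right hKb (norm_nonneg _)
      -- continuity of g on [0, t₁]
      have hgcont : ContinuousOn g (Icc 0 t₁) := by
        have : ContinuousOn (fun t => u (φ t)) (Icc 0 t₁) :=
          hu.continuousOn.comp hφcont.continuousOn hmemS
        exact this.sub continuousOn_const
      -- Gronwall on [a, t₁] for each a ∈ (0, t₁)
      have hgron : ∀ a ∈ Ioo (0:ℝ) t₁, ‖g t₁‖ ≤ ‖g a‖ * exp (K * (t₁ - a)) := by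
        intro a ha
        have hgb := norm_le_gronwallBound_of_norm_deriv_right_le
          (f := g) (f' := fun t => fderiv ℝ u (φ t) (-(g t), 0))
          (δ := ‖g a‖) (K := K) (ε := 0) (a := a) (b := t₁)
          (hgcont.mono (Icc_subset_Icc (le_of_lt ha.1) le_rfl))
          (fun t ht => ((hgderiv t ⟨lt_of_lt_of_le ha.1 ht.1, ht.2⟩).hasDerivWithinAt))
          le_rfl
          (fun t ht => by
            rw [add_zero]
            exact hbound t ⟨lt_of_lt_of_le ha.1 ht.1, ht.2⟩)
          t₁ ⟨le_of_lt ha.2, le_rfl⟩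
        rwa [gronwallBound_ε0] at hgb
      -- pass to the limit a → 0⁺
      have hg0 : g 0 = 0 := by
        simp [hg, hφ, hγ, hv]
      have hgt₁ : ‖g t₁‖ ≤ 0 := by
        have htend : Tendsto (fun a => ‖g a‖ * exp (K * (t₁ - a))) (nhdsWithin 0 (Ioi 0))
            (nhds (‖g 0‖ * exp (K * (t₁ - 0)))) := by
          have hgat0 : ContinuousWithinAt g (Icc 0 t₁) 0 :=
            hgcont 0 ⟨le_rfl, le_of_lt ht₁pos⟩
          have h1 : Tendsto g (nhdsWithin 0 (Ioi 0)) (nhds (g 0)) := by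
            rw [← nhdsWithin_Ioc_eq_nhdsGT ht₁pos]
            exact hgat0.tendsto.mono_left (nhdsWithin_mono 0 Ioc_subset_Icc_self)
          have h2 : Tendsto (fun a => exp (K * (t₁ - a))) (nhdsWithin 0 (Ioi 0))
              (nhds (exp (K * (t₁ - 0)))) :=
            ((Real.continuous_exp.comp (continuous_const.mul
                (continuous_const.sub continuous_id))).tendsto 0).mono_left
              nhdsWithin_le_nhds
          exact (h1.norm).mul h2
        rw [hg0] at htend
        simp only [norm_zero, zero_mul] at htend
        apply ge_of_tendsto htend
        filter_upwards [Ioo_mem_nhdsGT_of_mem (Set.mem_Ico.mpr ⟨le_rfl, ht₁pos⟩)] with a ha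
        exact hgron a ha
      have : g t₁ = 0 := norm_le_zero_iff.mp hgt₁
      have := sub_eq_zero.mp this
      simpa [hg, hφ, hγ, hv] using this
    -- derivative bookkeeping at ξ₀
    have hmem0 : ((ξ₀, (0:ℝ)) : (Fin 3 → ℝ) × ℝ) ∈ S := ⟨le_rfl, by exact_mod_cast hT⟩
    set A : (Fin 3 → ℝ) →L[ℝ] (Fin 3 → ℝ) :=
      (fderivWithin ℝ u S (ξ₀, 0)).comp (ContinuousLinearMap.inl ℝ (Fin 3 → ℝ) ℝ) with hAdef
    have hι0 : HasFDerivAt (fun y : Fin 3 → ℝ => (y, (0:ℝ)))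
        (ContinuousLinearMap.inl ℝ (Fin 3 → ℝ) ℝ) ξ₀ := hasFDerivAt_prodMk_left ξ₀ 0
    have hA : HasFDerivAt (fun y : Fin 3 → ℝ => u (y, 0)) A ξ₀ := by
      have hdw : HasFDerivWithinAt u (fderivWithin ℝ u S (ξ₀, 0)) S (ξ₀, 0) :=
        ((hu.differentiableOn two_ne_zero) _ hmem0).hasFDerivWithinAt
      have hcomp := hdw.comp (t := S) ξ₀ (hι0.hasFDerivWithinAt (s := Set.univ))
        (fun y _ => ⟨le_rfl, by exact_mod_cast hT⟩)
      rw [← hasFDerivWithinAt_univ]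
      exact hcomp
    -- A w = ℓ • w
    have hAw : A w = ℓ • w := by
      have hcompA : ∀ i, fderiv ℝ (fun y => u (y, 0) i) ξ₀
          = (ContinuousLinearMap.proj (R := ℝ) (φ := fun _ : Fin 3 => ℝ) i).comp A := by
        intro i
        exact ((ContinuousLinearMap.proj (R := ℝ) (φ := fun _ : Fin 3 => ℝ)
          i).hasFDerivAt.comp ξ₀ hA).fderiv
      have hMw : (spatialJacobian u ξ₀ 0).mulVec w = A w := by
        funext i
        rw [Matrix.mulVec]
        simp only [spatialJacobian, Matrix.of_apply]
        have : A w = ∑ j, w j • A (Pi.single j 1) := by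
          have hw' : w = ∑ j, w j • (Pi.single j 1 : Fin 3 → ℝ) := by
            have : ∀ j, w j • (Pi.single j 1 : Fin 3 → ℝ) = Pi.single j (w j) := by
              intro j; ext k
              by_cases h : k = j
              · subst h; simp
              · simp [Pi.single_eq_of_ne h]
            simp_rw [this]
            exact (Finset.univ_sum_single w).symm
          conv_lhs => rw [hw']
          rw [map_sum]
          simp_rw [map_smul]
        rw [this, Finset.sum_apply]
        rw [dotProduct]
        congr 1
        funext j
        rw [hcompA i]
        simp [mul_comm]
      rw [← hMw]
      exact heig
    -- the map Φ and its derivative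
    set Φ : (Fin 3 → ℝ) → (Fin 3 → ℝ) := fun x => x + t₁ • u (x, 0) with hΦdef
    have hΦd : HasFDerivAt Φ (ContinuousLinearMap.id ℝ (Fin 3 → ℝ) + t₁ • A) ξ₀ :=
      (hasFDerivAt_id ξ₀).add (hA.const_smul t₁)
    have hp₁U : ((Φ ξ₀, t₁) : (Fin 3 → ℝ) × ℝ) ∈ U := ⟨ht₁pos, ht₁T⟩
    have hd₁ : DifferentiableAt ℝ u (Φ ξ₀, t₁) :=
      (hu.contDiffAt (hSnhds _ hp₁U)).differentiableAt two_ne_zero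
    set B : (Fin 3 → ℝ) →L[ℝ] (Fin 3 → ℝ) :=
      (fderiv ℝ u (Φ ξ₀, t₁)).comp (ContinuousLinearMap.inl ℝ (Fin 3 → ℝ) ℝ) with hBdef
    have hB : HasFDerivAt (fun y : Fin 3 → ℝ => u (y, t₁)) B (Φ ξ₀) :=
      hd₁.hasFDerivAt.comp (Φ ξ₀) (hasFDerivAt_prodMk_left (Φ ξ₀) t₁)
    have hF : HasFDerivAt (fun x => u (Φ x, t₁) - u (x, 0))
        (B.comp (ContinuousLinearMap.id ℝ (Fin 3 → ℝ) + t₁ • A) - A) ξ₀ :=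
      (hB.comp ξ₀ hΦd).sub hA
    have hFzero : (fun x => u (Φ x, t₁) - u (x, 0)) = fun _ => (0 : Fin 3 → ℝ) := by
      funext x
      rw [sub_eq_zero]
      exact flow x
    have hF0 : HasFDerivAt (fun x => u (Φ x, t₁) - u (x, 0))
        (0 : (Fin 3 → ℝ) →L[ℝ] (Fin 3 → ℝ)) ξ₀ := by
      rw [hFzero]
      exact hasFDerivAt_const 0 ξ₀
    have hDeq : B.comp (ContinuousLinearMap.id ℝ (Fin 3 → ℝ) + t₁ • A) - A = 0 :=
      hF.unique hF0
    have happ := congrArg (fun L : (Fin 3 → ℝ) →L[ℝ] (Fin 3 → ℝ) => L w) hDeq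
    simp only [ContinuousLinearMap.sub_apply, ContinuousLinearMap.comp_apply,
      ContinuousLinearMap.add_apply, ContinuousLinearMap.id_apply,
      ContinuousLinearMap.smul_apply, ContinuousLinearMap.zero_apply] at happ
    rw [hAw] at happ
    have hcollapse : w + t₁ • (ℓ • w) = 0 := by
      rw [smul_smul]
      have : t₁ * ℓ = -1 := by
        rw [ht₁def]; field_simp
      rw [this]
      simp
    rw [hcollapse, map_zero, zero_sub, neg_eq_zero] at happ
    exact hw ((smul_eq_zero.mp happ).resolve_left hℓ0)
  have h1 : T ≤ ((-1 / ℓ : ℝ) : EReal) := not_lt.mp key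
  exact ⟨h1, lt_of_le_of_lt h1 (EReal.coe_lt_top _)⟩
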